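/- For any graph G, the treewidth tw(G) satisfies tw(G) ≤ max{1, ⌊(3/2)·bw(G)⌋ − 1}, where bw(G) denotes the branchwidth of G. -/

import Mathlib

/-- A tree decomposition of a graph `G`: a tree of bags covering all vertices
and edges, such that the bags containing any fixed vertex form a subtree. -/
structure TreeDecomp {V : Type} (G : SimpleGraph V) : Type 1 where
  ι : Type
  T : SimpleGraph ι
  tree : T.IsTree
  bag : ι → Set V
  bag_finite : ∀ i, (bag i).Finite
  bag_vert : ∀ v : V, ∃ i, v ∈ bag i
  bag_edge : ∀ ⦃u v : V⦄, G.Adj u v → ∃ i, u ∈ bag i ∧ v ∈ bag i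
  bag_conn : ∀ v : V, (T.induce {i | v ∈ bag i}).Connected

/-- The width of a tree decomposition: maximum bag size minus one. -/
noncomputable def TreeDecomp.width {V : Type} {G : SimpleGraph V} (d : TreeDecomp G) : ℕ∞ :=
  ⨆ i : d.ι, ((d.bag i).ncard : ℕ∞) - 1

/-- The treewidth of a graph: the least width of a tree decomposition. -/
noncomputable def treewidth {V : Type} (G : SimpleGraph V) : ℕ∞ :=
  ⨅ d : TreeDecomp G, d.width

/-- A branch decomposition of `G`: a finite tree of maximum degree `3` whose
leaves are injectively labelled by the edges of `G`. -/
structure BranchDecomp {V : Type} (G : SimpleGraph V) : Type 1 where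
  ι : Type
  fin : Finite ι
  T : SimpleGraph ι
  tree : T.IsTree
  degree_le : ∀ i : ι, (T.neighborSet i).ncard ≤ 3
  leaf : G.edgeSet → ι
  leaf_inj : Function.Injective leaf
  leaf_isLeaf : ∀ e : G.edgeSet, (T.neighborSet (leaf e)).ncard ≤ 1

namespace BranchDecomp

variable {V : Type} {G : SimpleGraph V} (d : BranchDecomp G)

/-- A vertex `v` crosses the arc `{i, j}` of the decomposition tree if two edges
incident to `v` are assigned to leaves in different components of `T - {i, j}`. -/
def Crosses (v : V) (i j : d.ι) : Prop :=
  ∃ e₁ e₂ : G.edgeSet, v ∈ e₁.val ∧ v ∈ e₂.val ∧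
    (d.T.deleteEdges {s(i, j)}).Reachable (d.leaf e₁) i ∧
    (d.T.deleteEdges {s(i, j)}).Reachable (d.leaf e₂) j

/-- The width of a branch decomposition: the maximum, over arcs of the tree,
of the number of vertices crossing the arc. -/
noncomputable def width : ℕ∞ :=
  ⨆ i : d.ι, ⨆ j : d.ι, ⨆ _ : d.T.Adj i j, ({v : V | d.Crosses v i j}.ncard : ℕ∞)

end BranchDecomp

/-- The branchwidth of a graph: the least width of a branch decomposition. -/
noncomputable def branchwidth {V : Type} (G : SimpleGraph V) : ℕ∞ :=
  ⨅ d : BranchDecomp G, d.width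


open SimpleGraph Sum

variable {ι β : Type}

/-- Attach pendant vertices `β` to a graph on `ι` via attachment map `att`. -/
def pend (T : SimpleGraph ι) (att : β → ι) : SimpleGraph (ι ⊕ β) where
  Adj u v := match u, v with
    | .inl a, .inl b => T.Adj a b
    | .inl a, .inr x => att x = a
    | .inr x, .inl a => att x = a
    | .inr _, .inr _ => False
  symm := ⟨by rintro (a|x) (b|y) h <;> first | exact h.symm | exact h⟩
  loopless := ⟨by rintro (a|x) h; exact (T.loopless.irrefl a) h; exact h⟩

variable {T : SimpleGraph ι} {att : β → ι}

@[simp] lemma pend_adj_inl_inl {a b : ι} : (pend T att).Adj (inl a) (inl b) ↔ T.Adj a b := Iff.rfl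
@[simp] lemma pend_adj_inl_inr {a : ι} {x : β} : (pend T att).Adj (inl a) (inr x) ↔ att x = a := Iff.rfl
@[simp] lemma pend_adj_inr_inl {a : ι} {x : β} : (pend T att).Adj (inr x) (inl a) ↔ att x = a := Iff.rfl
@[simp] lemma pend_adj_inr_inr {x y : β} : ¬ (pend T att).Adj (inr x) (inr y) := fun h => h

/-- Walks between base vertices in the pendant graph project to the base graph. -/
lemma pend_proj_walk : ∀ (n : ℕ) {a b : ι} (W : (pend T att).Walk (inl a) (inl b)),
    W.length ≤ n → ∃ W' : T.Walk a b,
      ∀ x y : ι, s(x, y) ∈ W'.edges → s((inl x : ι ⊕ β), inl y) ∈ W.edges := by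
  intro n
  induction n with
  | zero =>
    intro a b W hlen
    cases W with
    | nil => exact ⟨SimpleGraph.Walk.nil, by simp⟩
    | cons h q => simp [SimpleGraph.Walk.length_cons] at hlen
  | succ m ih =>
    intro a b W hlen
    cases W with
    | nil => exact ⟨SimpleGraph.Walk.nil, by simp⟩
    | @cons _ c _ h W₁ =>
      cases c with
      | inl a' =>
        obtain ⟨W₂, hW₂⟩ := ih W₁ (by simpa [SimpleGraph.Walk.length_cons] using hlen)
        have h' : T.Adj a a' := h
        refine ⟨SimpleGraph.Walk.cons h' W₂, ?_⟩
        intro x y hxy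
        rw [SimpleGraph.Walk.edges_cons] at hxy ⊢
        rcases List.mem_cons.mp hxy with heq | hmem
        · refine List.mem_cons.mpr (Or.inl ?_)
          rcases Sym2.eq_iff.mp heq with ⟨rfl, rfl⟩ | ⟨rfl, rfl⟩
          · rfl
          · exact Sym2.eq_swap
        · exact List.mem_cons_of_mem _ (hW₂ x y hmem)
      | inr z =>
        cases W₁ with
        | @cons _ c₂ _ h₂ W₂ =>
          cases c₂ with
          | inl a₂ =>
            have ha₂ : a₂ = a := by
              have h' : att z = a := h
              have h₂' : att z = a₂ := h₂
              rw [← h₂', h']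
            subst ha₂
            obtain ⟨W₃, hW₃⟩ := ih W₂ (by
              simp only [SimpleGraph.Walk.length_cons] at hlen ⊢
              omega)
            refine ⟨W₃, ?_⟩
            intro x y hxy
            have := hW₃ x y hxy
            rw [SimpleGraph.Walk.edges_cons, SimpleGraph.Walk.edges_cons]
            exact List.mem_cons_of_mem _ (List.mem_cons_of_mem _ this)
          | inr _ => exact absurd h₂ (pend_adj_inr_inr)

lemma pend_connected (hT : T.Connected) : (pend T att).Connected := by
  have hne : Nonempty ι := hT.nonempty
  have hom : T →g pend T att := ⟨inl, fun h => h⟩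
  have key : ∀ u : ι ⊕ β, ∃ a : ι, (pend T att).Reachable u (inl a) := by
    rintro (a | x)
    · exact ⟨a, SimpleGraph.Reachable.refl _⟩
    · exact ⟨att x, SimpleGraph.Adj.reachable (by simp)⟩
  constructor
  intro u v
  obtain ⟨a, ha⟩ := key u
  obtain ⟨b, hb⟩ := key v
  have h2 : (pend T att).Reachable (inl a) (inl b) :=
    SimpleGraph.Reachable.map (⟨inl, fun h => h⟩ : T →g pend T att) (hT.preconnected a b)
  exact ha.trans (h2.trans hb.symm)

lemma pend_isTree (hT : T.IsTree) : (pend T att).IsTree := by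
  constructor
  · exact pend_connected hT.isConnected
  · rw [SimpleGraph.isAcyclic_iff_forall_adj_isBridge]
    rintro (a | x) (b | y) h
    · -- inl-inl
      rw [SimpleGraph.isBridge_iff]
      rw [SimpleGraph.reachable_delete_edges_iff_exists_walk]
      rintro ⟨p, hp⟩
      obtain ⟨W', hW'⟩ := pend_proj_walk p.length p le_rfl
      have hbridge : T.IsBridge s(a, b) :=
        (SimpleGraph.isAcyclic_iff_forall_adj_isBridge.mp hT.IsAcyclic) h
      have : s(a, b) ∈ W'.edges :=
        (SimpleGraph.isBridge_iff_adj_and_forall_walk_mem_edges.mp hbridge) W'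
      exact hp (hW' a b this)
    · -- inl-inr
      rw [SimpleGraph.isBridge_iff]
      rw [SimpleGraph.reachable_delete_edges_iff_exists_walk]
      rintro ⟨p, hp⟩
      apply hp
      have hrev : ¬ p.reverse.Nil := SimpleGraph.Walk.not_nil_of_ne (by simp)
      obtain ⟨u, hadj, q, hq⟩ := SimpleGraph.Walk.not_nil_iff.mp hrev
      cases u with
      | inl c =>
        have hc : c = a := by have h1 : att y = c := hadj; have h2 : att y = a := h; rw [← h1, h2]
        have hmem : s((inr y : ι ⊕ β), inl c) ∈ p.reverse.edges := by
          rw [hq, SimpleGraph.Walk.edges_cons]; exact List.mem_cons_self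
        rw [SimpleGraph.Walk.edges_reverse, List.mem_reverse, Sym2.eq_swap] at hmem
        rwa [hc] at hmem
      | inr _ => exact absurd hadj (pend_adj_inr_inr)
    · -- inr-inl : symmetric
      rw [SimpleGraph.isBridge_iff]
      rw [SimpleGraph.reachable_delete_edges_iff_exists_walk]
      rintro ⟨p, hp⟩
      apply hp
      have hnn : ¬ p.Nil := SimpleGraph.Walk.not_nil_of_ne (by simp)
      obtain ⟨u, hadj, q, hq⟩ := SimpleGraph.Walk.not_nil_iff.mp hnn
      cases u with
      | inl c =>
        have hc : c = b := by have h1 : att x = c := hadj; have h2 : att x = b := h; rw [← h1, h2]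
        subst hc
        rw [hq, SimpleGraph.Walk.edges_cons]
        exact List.mem_cons_self
      | inr _ => exact absurd hadj (pend_adj_inr_inr)
    · exact absurd h (pend_adj_inr_inr)

open SimpleGraph

variable {α : Type} {G : SimpleGraph α}

/-- In a path, any edge containing the start vertex is the first edge. -/
lemma edge_start_eq {x y : α} (q : G.Walk x y) (hq : q.IsPath) {e : Sym2 α}
    (he : e ∈ q.edges) (hx : x ∈ e) : e = s(x, q.getVert 1) := by
  cases q with
  | nil => simp at he
  | @cons _ c _ h r =>
    rw [SimpleGraph.Walk.edges_cons] at he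
    rcases List.mem_cons.mp he with heq | hmem
    · rw [heq]
      have hc : (SimpleGraph.Walk.cons h r).getVert 1 = c := by
        simp [SimpleGraph.Walk.getVert_cons_succ]
      rw [hc]
    · exfalso
      obtain ⟨z, rfl⟩ : ∃ z, e = s(x, z) := ⟨Sym2.Mem.other hx, (Sym2.other_spec hx).symm⟩
      have : x ∈ r.support := SimpleGraph.Walk.fst_mem_support_of_mem_edges r hmem
      exact (SimpleGraph.Walk.cons_isPath_iff _ _ |>.mp hq).2 this

/-- H1: walking away from `i` along a path starting with the edge to `j := getVert 1`,
the far endpoint is reachable from `j` avoiding the edge `s(i,j)`. -/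
lemma reach_snd_side {i x : α} (q : G.Walk i x) (hq : q.IsPath) (hnn : ¬ q.Nil) :
    (G.deleteEdges {s(i, q.getVert 1)}).Reachable x (q.getVert 1) := by
  have hi : i ∉ q.tail.support := by
    have := SimpleGraph.Walk.cons_support_tail hnn
    have hnodup := hq.support_nodup
    rw [← this] at hnodup
    exact (List.nodup_cons.mp hnodup).1
  have hedges : ∀ e ∈ q.tail.edges, e ∉ ({s(i, q.getVert 1)} : Set (Sym2 α)) := by
    intro e he hmem
    rw [Set.mem_singleton_iff] at hmem
    subst hmem
    exact hi (SimpleGraph.Walk.fst_mem_support_of_mem_edges q.tail he)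
  exact ⟨(q.tail.toDeleteEdges _ hedges).reverse⟩

/-- H2: if `j` is not the second vertex of path `q` out of `i`, then the endpoint of `q`
reaches `i` avoiding the edge `s(i,j)`. -/
lemma reach_start_side {i x j : α} (q : G.Walk i x) (hq : q.IsPath) (hj : j ≠ q.getVert 1)
    (hji : j ≠ i) : (G.deleteEdges {s(i, j)}).Reachable x i := by
  have hedges : ∀ e ∈ q.edges, e ∉ ({s(i, j)} : Set (Sym2 α)) := by
    intro e he hmem
    rw [Set.mem_singleton_iff] at hmem
    subst hmem
    have := edge_start_eq q hq he (by simp)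
    rw [Sym2.eq_iff] at this
    rcases this with ⟨-, h2⟩ | ⟨h1, h2⟩
    · exact hj h2
    · exact hji h2
  exact ⟨(q.toDeleteEdges _ hedges).reverse⟩

lemma getVert_one_mem_support {i x : α} (q : G.Walk i x) : q.getVert 1 ∈ q.support := by
  cases q with
  | nil => simp only [SimpleGraph.Walk.support_nil, List.mem_singleton]; rfl
  | cons h r =>
    rw [SimpleGraph.Walk.support_cons]
    exact List.mem_cons_of_mem _ (by simp [SimpleGraph.Walk.getVert_cons_succ])

namespace BranchDecomp
variable {V : Type} {G : SimpleGraph V} (d : BranchDecomp G)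

noncomputable def tpath (a b : d.ι) : d.T.Walk a b :=
  (d.tree.existsUnique_path a b).exists.choose

lemma tpath_isPath (a b : d.ι) : (d.tpath a b).IsPath :=
  (d.tree.existsUnique_path a b).exists.choose_spec

lemma crosses_of_mem_path {v : V} {e₁ e₂ : G.edgeSet} (hv₁ : v ∈ e₁.val) (hv₂ : v ∈ e₂.val)
    {i : d.ι} (hi : i ∈ (d.tpath (d.leaf e₁) (d.leaf e₂)).support) :
    (∃ e : G.edgeSet, d.leaf e = i ∧ v ∈ e.val) ∨
    ∃ j j' : d.ι, d.T.Adj i j ∧ d.T.Adj i j' ∧ j ≠ j' ∧ d.Crosses v i j ∧ d.Crosses v i j' := by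
  classical
  set a := d.leaf e₁ with ha
  set b := d.leaf e₂ with hb
  set p := d.tpath a b with hpdef
  have hp : p.IsPath := d.tpath_isPath a b
  by_cases hai : a = i
  · exact Or.inl ⟨e₁, hai.symm ▸ rfl, hv₁⟩
  by_cases hbi : b = i
  · exact Or.inl ⟨e₂, hbi.symm ▸ rfl, hv₂⟩
  right
  set t := p.takeUntil i hi with htdef
  set q₁ := t.reverse with hq₁def
  set q₂ := p.dropUntil i hi with hq₂def
  have hq₁path : q₁.IsPath := (hp.takeUntil hi).reverse
  have hq₂path : q₂.IsPath := hp.dropUntil hi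
  have hnn₁ : ¬ q₁.Nil := SimpleGraph.Walk.not_nil_of_ne (fun h => hai h.symm)
  have hnn₂ : ¬ q₂.Nil := SimpleGraph.Walk.not_nil_of_ne (fun h => hbi h.symm)
  set j := q₁.getVert 1 with hjdef
  set j' := q₂.getVert 1 with hj'def
  have hadj_j : d.T.Adj i j := q₁.adj_snd hnn₁
  have hadj_j' : d.T.Adj i j' := q₂.adj_snd hnn₂
  -- j ∈ t.support
  have hjt : j ∈ t.support := by
    have := getVert_one_mem_support q₁
    rwa [hq₁def, SimpleGraph.Walk.support_reverse, List.mem_reverse] at this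
  -- j' ∈ q₂.support.tail
  have hj't : j' ∈ q₂.support.tail := by
    have h1 : i :: q₂.tail.support = q₂.support := SimpleGraph.Walk.cons_support_tail hnn₂
    have h2 : q₂.support.tail = q₂.tail.support := by rw [← h1, List.tail_cons]
    rw [h2]
    exact q₂.tail.start_mem_support
  -- distinctness
  have hjj' : j ≠ j' := by
    intro heq
    have hspec : t.append q₂ = p := SimpleGraph.Walk.take_spec p hi
    have hsup : p.support = t.support ++ q₂.support.tail := by
      rw [← hspec, SimpleGraph.Walk.support_append]
    have hnodup := hp.support_nodup
    rw [hsup] at hnodup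
    have hdisj := (List.nodup_append.mp hnodup).2.2
    exact hdisj j hjt j (heq ▸ hj't) rfl
  refine ⟨j, j', hadj_j, hadj_j', hjj', ?_, ?_⟩
  · exact ⟨e₂, e₁, hv₂, hv₁,
      reach_start_side q₂ hq₂path (fun h => hjj' h) hadj_j.ne',
      reach_snd_side q₁ hq₁path hnn₁⟩
  · exact ⟨e₁, e₂, hv₁, hv₂,
      reach_start_side q₁ hq₁path (fun h => hjj' h.symm) hadj_j'.ne',
      reach_snd_side q₂ hq₂path hnn₂⟩

end BranchDecomp

namespace BranchDecomp2
open BranchDecomp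
variable {V : Type} {G : SimpleGraph V} (d : BranchDecomp G)

lemma sym2_set_finite (z : Sym2 V) : {x : V | x ∈ z}.Finite := by
  induction z using Sym2.ind with
  | _ a b =>
    apply Set.Finite.subset ((Set.finite_singleton b).insert a)
    intro x hx
    rcases Sym2.mem_iff.mp hx with rfl | rfl
    · exact Set.mem_insert _ _
    · exact Set.mem_insert_of_mem _ rfl

lemma sym2_set_ncard_le (z : Sym2 V) : {x : V | x ∈ z}.ncard ≤ 2 := by
  induction z using Sym2.ind with
  | _ a b =>
    have hsub : {x : V | x ∈ s(a, b)} ⊆ {a, b} := by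
      intro x hx
      rcases Sym2.mem_iff.mp hx with rfl | rfl <;> simp
    calc {x : V | x ∈ s(a,b)}.ncard ≤ ({a, b} : Set V).ncard :=
          Set.ncard_le_ncard hsub ((Set.finite_singleton b).insert a)
      _ ≤ 2 := by
          by_cases hab : a = b
          · subst hab; simp
          · rw [Set.ncard_pair hab]

lemma incident_finite (d : BranchDecomp G) : ({v : V | ∃ e : G.edgeSet, v ∈ e.val}).Finite := by
  haveI := d.fin
  haveI : Finite G.edgeSet := Finite.of_injective d.leaf d.leaf_inj
  have : {v : V | ∃ e : G.edgeSet, v ∈ e.val} = ⋃ e : G.edgeSet, {x : V | x ∈ e.val} := by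
    ext x; simp
  rw [this]
  exact Set.finite_iUnion fun e => sym2_set_finite e.val

lemma bigBag_ncard_le (w : ℕ)
    (hw : ∀ i j : d.ι, d.T.Adj i j → ({v : V | d.Crosses v i j}).ncard ≤ w) (i : d.ι) :
    ({v : V | ∃ e₁ e₂ : G.edgeSet, v ∈ e₁.val ∧ v ∈ e₂.val ∧
      i ∈ (d.tpath (d.leaf e₁) (d.leaf e₂)).support}).ncard ≤ max 2 (3 * w / 2) := by
  classical
  haveI := d.fin
  set A := {v : V | ∃ e₁ e₂ : G.edgeSet, v ∈ e₁.val ∧ v ∈ e₂.val ∧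
      i ∈ (d.tpath (d.leaf e₁) (d.leaf e₂)).support} with hA
  by_cases hL : ∃ e : G.edgeSet, d.leaf e = i
  · obtain ⟨e₀, he₀⟩ := hL
    have hsub : A ⊆ {x : V | x ∈ e₀.val} := by
      rintro v ⟨e₁, e₂, hv₁, hv₂, hi⟩
      rcases d.crosses_of_mem_path hv₁ hv₂ hi with ⟨e, he, hv⟩ | ⟨j, j', hj, hj', hne, -, -⟩
      · have : e = e₀ := d.leaf_inj (by rw [he, he₀])
        exact this ▸ hv
      · exfalso
        have hsub2 : ({j, j'} : Set d.ι) ⊆ d.T.neighborSet i := by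
          intro x hx
          rcases hx with rfl | hx
          · exact hj
          · rw [Set.mem_singleton_iff] at hx; subst hx; exact hj'
        have h2 : ({j, j'} : Set d.ι).ncard ≤ (d.T.neighborSet i).ncard :=
          Set.ncard_le_ncard hsub2 (Set.toFinite _)
        rw [Set.ncard_pair hne] at h2
        have h3 := d.leaf_isLeaf e₀
        rw [he₀] at h3
        omega
    calc A.ncard ≤ {x : V | x ∈ e₀.val}.ncard :=
          Set.ncard_le_ncard hsub (sym2_set_finite e₀.val)
      _ ≤ 2 := sym2_set_ncard_le e₀.val
      _ ≤ max 2 (3 * w / 2) := le_max_left _ _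
  · -- no leaf at i; every bag element crosses two distinct arcs at i
    set B := {v : V | ∃ j j' : d.ι, d.T.Adj i j ∧ d.T.Adj i j' ∧ j ≠ j' ∧
      d.Crosses v i j ∧ d.Crosses v i j'} with hB
    have hAB : A ⊆ B := by
      rintro v ⟨e₁, e₂, hv₁, hv₂, hi⟩
      rcases d.crosses_of_mem_path hv₁ hv₂ hi with ⟨e, he, -⟩ | ⟨j, j', hj, hj', hne, hc, hc'⟩
      · exact absurd ⟨e, he⟩ hL
      · exact ⟨j, j', hj, hj', hne, hc, hc'⟩
    have hBU : B ⊆ {v : V | ∃ e : G.edgeSet, v ∈ e.val} := by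
      rintro v ⟨j, j', hj, hj', hne, ⟨e₁, e₂, hv₁, hv₂, -, -⟩, -⟩
      exact ⟨e₁, hv₁⟩
    have hBfin : B.Finite := (incident_finite d).subset hBU
    have hAfin : A.Finite := hBfin.subset hAB
    set BF := hBfin.toFinset with hBF
    set NF := (Set.toFinite (d.T.neighborSet i)).toFinset with hNF
    have key : 2 * BF.card ≤ ∑ j ∈ NF, (BF.filter (fun v => d.Crosses v i j)).card := by
      have : ∀ j, (BF.filter (fun v => d.Crosses v i j)).card
          = ∑ v ∈ BF, if d.Crosses v i j then 1 else 0 := by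
        intro j; rw [Finset.card_filter]
      simp_rw [this]
      rw [Finset.sum_comm]
      have inner : ∀ v ∈ BF, 2 ≤ ∑ j ∈ NF, if d.Crosses v i j then 1 else 0 := by
        intro v hv
        rw [Set.Finite.mem_toFinset] at hv
        obtain ⟨j, j', hj, hj', hne, hc, hc'⟩ := hv
        have : ({j, j'} : Finset d.ι) ⊆ NF.filter (fun j => d.Crosses v i j) := by
          intro x hx
          rcases Finset.mem_insert.mp hx with rfl | hx
          · exact Finset.mem_filter.mpr ⟨Set.Finite.mem_toFinset _ |>.mpr hj, hc⟩
          · rw [Finset.mem_singleton] at hx; subst hx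
            exact Finset.mem_filter.mpr ⟨Set.Finite.mem_toFinset _ |>.mpr hj', hc'⟩
        calc 2 = ({j, j'} : Finset d.ι).card := (Finset.card_pair hne).symm
          _ ≤ (NF.filter (fun j => d.Crosses v i j)).card := Finset.card_le_card this
          _ = ∑ j ∈ NF, if d.Crosses v i j then 1 else 0 := by rw [Finset.card_filter]
      calc 2 * BF.card = BF.card * 2 := by ring
        _ = ∑ _v ∈ BF, 2 := by rw [Finset.sum_const, smul_eq_mul]
        _ ≤ ∑ v ∈ BF, ∑ j ∈ NF, if d.Crosses v i j then 1 else 0 := Finset.sum_le_sum inner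
    have bound : ∀ j ∈ NF, (BF.filter (fun v => d.Crosses v i j)).card ≤ w := by
      intro j hj
      rw [Set.Finite.mem_toFinset] at hj
      have hmidfin : ({v : V | d.Crosses v i j}).Finite := by
        apply (incident_finite d).subset
        rintro v ⟨e₁, e₂, hv₁, -, -, -⟩
        exact ⟨e₁, hv₁⟩
      have hsub : BF.filter (fun v => d.Crosses v i j) ⊆ hmidfin.toFinset := by
        intro v hv
        rw [Set.Finite.mem_toFinset]
        exact (Finset.mem_filter.mp hv).2
      calc (BF.filter (fun v => d.Crosses v i j)).card ≤ hmidfin.toFinset.card :=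
            Finset.card_le_card hsub
        _ = ({v : V | d.Crosses v i j}).ncard := (Set.ncard_eq_toFinset_card _ hmidfin).symm
        _ ≤ w := hw i j hj
    have hNF3 : NF.card ≤ 3 := by
      have := d.degree_le i
      rwa [Set.ncard_eq_toFinset_card _ (Set.toFinite _)] at this
    have total : 2 * BF.card ≤ 3 * w := by
      calc 2 * BF.card ≤ ∑ j ∈ NF, (BF.filter (fun v => d.Crosses v i j)).card := key
        _ ≤ NF.card * w := by
            classical
            calc ∑ j ∈ NF, (BF.filter (fun v => d.Crosses v i j)).card
                ≤ ∑ _j ∈ NF, w := Finset.sum_le_sum bound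
              _ = NF.card * w := by rw [Finset.sum_const, smul_eq_mul]
        _ ≤ 3 * w := Nat.mul_le_mul_right w hNF3
    have hAle : A.ncard ≤ BF.card := by
      rw [← Set.ncard_eq_toFinset_card _ hBfin]
      exact Set.ncard_le_ncard hAB hBfin
    have : A.ncard ≤ 3 * w / 2 := by omega
    exact le_trans this (le_max_right _ _)

end BranchDecomp2

open SimpleGraph

lemma connected_induce_singleton {α : Type} (G : SimpleGraph α) (a : α) :
    (G.induce {a}).Connected := by
  haveI : Nonempty ({a} : Set α) := ⟨⟨a, rfl⟩⟩
  constructor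
  intro u v
  have : u = v := Subtype.ext (by rw [u.2.out, v.2.out])
  exact this ▸ Reachable.refl _

lemma induce_iUnion_connected {α β : Type} [Finite β] [Nonempty β] (G : SimpleGraph α)
    (f : β → Set α) (a₀ : α) (ha : ∀ b, a₀ ∈ f b)
    (hc : ∀ b, (G.induce (f b)).Connected) : (G.induce (⋃ b, f b)).Connected := by
  classical
  haveI := Fintype.ofFinite β
  have aux : ∀ s : Finset β, s.Nonempty → (G.induce (⋃ b ∈ s, f b)).Connected := by
    intro s hs
    induction s using Finset.induction_on with
    | empty => exact absurd hs (by simp)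
    | @insert a s hass ih =>
      by_cases hse : s.Nonempty
      · have hrw : ⋃ b ∈ insert a s, f b = f a ∪ ⋃ b ∈ s, f b := by
          simp [Set.biUnion_insert]
        rw [hrw]
        apply SimpleGraph.induce_union_connected (hc a).preconnected (ih hse).preconnected
        refine ⟨a₀, ha a, ?_⟩
        obtain ⟨b₀, hb₀⟩ := hse
        exact Set.mem_biUnion hb₀ (ha b₀)
      · have : s = ∅ := Finset.not_nonempty_iff_eq_empty.mp hse
        subst this
        have hrw : ⋃ b ∈ insert a (∅ : Finset β), f b = f a := by simp
        rw [hrw]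
        exact hc a
  have : (⋃ b, f b) = ⋃ b ∈ (Finset.univ : Finset β), f b := by simp
  rw [this]
  exact aux _ Finset.univ_nonempty

namespace BWaux
open SimpleGraph Sum BranchDecomp BranchDecomp2

variable {V : Type} {G : SimpleGraph V}

lemma induce_walk_support_connected {α : Type} {T : SimpleGraph α} {a b : α} (W : T.Walk a b) :
    (T.induce {k | k ∈ W.support}).Connected := by
  have := W.toSubgraph_connected.induce_verts
  rwa [W.verts_toSubgraph] at this

lemma induce_image_inl_connected {ι β : Type} {T : SimpleGraph ι} (att : β → ι) {S : Set ι}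
    (h : (T.induce S).Connected) : ((pend T att).induce (Sum.inl '' S)).Connected := by
  apply h.map (f := ⟨fun u => ⟨inl u.1, ⟨u.1, u.2, rfl⟩⟩, fun hadj => hadj⟩)
  rintro ⟨k, i, hi, rfl⟩
  exact ⟨⟨i, hi⟩, rfl⟩

/-- The bag at a base node. -/
noncomputable def dbag (d : BranchDecomp G) (i : d.ι) : Set V :=
  {v | ∃ h : (∃ e : G.edgeSet, v ∈ e.val), ∃ e₂ : G.edgeSet, v ∈ e₂.val ∧
    i ∈ (d.tpath (d.leaf h.choose) (d.leaf e₂)).support}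

lemma dbag_subset_bigBag (d : BranchDecomp G) (i : d.ι) :
    dbag d i ⊆ {v : V | ∃ e₁ e₂ : G.edgeSet, v ∈ e₁.val ∧ v ∈ e₂.val ∧
      i ∈ (d.tpath (d.leaf e₁) (d.leaf e₂)).support} := by
  rintro v ⟨h, e₂, hv₂, hi⟩
  exact ⟨h.choose, e₂, h.choose_spec, hv₂, hi⟩

lemma dbag_subset_incident (d : BranchDecomp G) (i : d.ι) :
    dbag d i ⊆ {v : V | ∃ e : G.edgeSet, v ∈ e.val} := by
  rintro v ⟨h, -⟩
  exact h

/-- The tree decomposition obtained from a branch decomposition. -/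
noncomputable def theDecomp (d : BranchDecomp G) : TreeDecomp G where
  ι := d.ι ⊕ V
  T := pend d.T (fun _ : V => Classical.choice d.tree.isConnected.nonempty)
  tree := pend_isTree d.tree
  bag := Sum.elim (dbag d) (fun u => {v | v = u ∧ ¬ ∃ e : G.edgeSet, v ∈ e.val})
  bag_finite := by
    rintro (i | u)
    · exact (incident_finite d).subset (dbag_subset_incident d i)
    · exact (Set.finite_singleton u).subset (fun v hv => hv.1)
  bag_vert := by
    intro v
    by_cases hv : ∃ e : G.edgeSet, v ∈ e.val
    · refine ⟨inl (d.leaf hv.choose), hv, hv.choose, hv.choose_spec, ?_⟩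
      exact SimpleGraph.Walk.start_mem_support _
    · exact ⟨inr v, rfl, hv⟩
  bag_edge := by
    intro u v huv
    set e : G.edgeSet := ⟨s(u, v), huv⟩ with he
    have hu : u ∈ e.val := Sym2.mem_iff.mpr (Or.inl rfl)
    have hvv : v ∈ e.val := Sym2.mem_iff.mpr (Or.inr rfl)
    refine ⟨inl (d.leaf e), ⟨⟨e, hu⟩, e, hu, ?_⟩, ⟨⟨e, hvv⟩, e, hvv, ?_⟩⟩ <;>
      exact SimpleGraph.Walk.end_mem_support _
  bag_conn := by
    intro v
    by_cases hv : ∃ e : G.edgeSet, v ∈ e.val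
    · set S := {i : d.ι | v ∈ dbag d i} with hS
      have hSrw : {k : d.ι ⊕ V | v ∈ Sum.elim (dbag d)
          (fun u => {v | v = u ∧ ¬ ∃ e : G.edgeSet, v ∈ e.val}) k} = Sum.inl '' S := by
        ext k
        cases k with
        | inl i => simp [S]
        | inr u =>
          simp only [Set.mem_setOf_eq, Sum.elim_inr]
          constructor
          · rintro ⟨-, h⟩; exact absurd hv h
          · rintro ⟨i, -, h⟩; exact absurd h (by simp)
      rw [hSrw]
      apply induce_image_inl_connected
      have hSU : S = ⋃ (e : {e : G.edgeSet // v ∈ e.val}),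
          {k : d.ι | k ∈ (d.tpath (d.leaf hv.choose) (d.leaf e.val)).support} := by
        ext i
        constructor
        · rintro ⟨h, e₂, hv₂, hi⟩
          exact Set.mem_iUnion.mpr ⟨⟨e₂, hv₂⟩, hi⟩
        · intro hi
          obtain ⟨⟨e₂, hv₂⟩, hi⟩ := Set.mem_iUnion.mp hi
          exact ⟨hv, e₂, hv₂, hi⟩
      rw [hSU]
      haveI : Finite G.edgeSet := by
        haveI := d.fin
        exact Finite.of_injective d.leaf d.leaf_inj
      haveI : Finite {e : G.edgeSet // v ∈ e.val} := Subtype.finite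
      haveI : Nonempty {e : G.edgeSet // v ∈ e.val} := ⟨⟨hv.choose, hv.choose_spec⟩⟩
      apply induce_iUnion_connected _ _ (d.leaf hv.choose)
      · intro e
        exact SimpleGraph.Walk.start_mem_support _
      · intro e
        exact induce_walk_support_connected _
    · have hSrw : {k : d.ι ⊕ V | v ∈ Sum.elim (dbag d)
          (fun u => {v | v = u ∧ ¬ ∃ e : G.edgeSet, v ∈ e.val}) k} = {Sum.inr v} := by
        ext k
        cases k with
        | inl i =>
          simp only [Set.mem_setOf_eq, Sum.elim_inl]
          constructor
          · intro h; exact absurd (dbag_subset_incident d i h) hv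
          · intro h; exact absurd h (by simp)
        | inr u =>
          simp only [Set.mem_setOf_eq, Sum.elim_inr, Set.mem_singleton_iff]
          constructor
          · rintro ⟨rfl, -⟩; rfl
          · intro h
            cases h
            exact ⟨rfl, hv⟩
      rw [hSrw]
      exact connected_induce_singleton _ _

lemma theDecomp_width_le (d : BranchDecomp G) (w : ℕ) (hd : d.width ≤ (w : ℕ∞)) :
    (theDecomp d).width ≤ ((max 1 (3 * w / 2 - 1) : ℕ) : ℕ∞) := by
  have hmid : ∀ i j : d.ι, d.T.Adj i j → ({v : V | d.Crosses v i j}).ncard ≤ w := by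
    intro i j hadj
    have h1 : (({v : V | d.Crosses v i j}).ncard : ℕ∞) ≤ d.width :=
      le_iSup_of_le i (le_iSup_of_le j (le_iSup_of_le hadj le_rfl))
    exact_mod_cast h1.trans hd
  apply iSup_le
  intro k
  have cast_step : ∀ n m : ℕ, n - 1 ≤ m → (n : ℕ∞) - 1 ≤ (m : ℕ∞) := by
    intro n m h
    have h2 : ((n - 1 : ℕ) : ℕ∞) ≤ (m : ℕ∞) := by exact_mod_cast h
    rwa [ENat.coe_sub, Nat.cast_one] at h2
  rcases k with i | u
  · have hfin : ({v : V | ∃ e₁ e₂ : G.edgeSet, v ∈ e₁.val ∧ v ∈ e₂.val ∧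
        i ∈ (d.tpath (d.leaf e₁) (d.leaf e₂)).support}).Finite := by
      apply (incident_finite d).subset
      rintro v ⟨e₁, e₂, hv₁, -, -⟩
      exact ⟨e₁, hv₁⟩
    have h2 : (dbag d i).ncard ≤ max 2 (3 * w / 2) :=
      le_trans (Set.ncard_le_ncard (dbag_subset_bigBag d i) hfin) (bigBag_ncard_le d w hmid i)
    show (((theDecomp d).bag (inl i)).ncard : ℕ∞) - 1 ≤ _
    have hbag : (theDecomp d).bag (inl i) = dbag d i := rfl
    rw [hbag]
    exact cast_step _ _ (by omega)
  · show (((theDecomp d).bag (inr u)).ncard : ℕ∞) - 1 ≤ _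
    have hsub : (theDecomp d).bag (inr u) ⊆ {u} := fun v hv => hv.1
    have h1 : ((theDecomp d).bag (inr u)).ncard ≤ 1 := by
      have := Set.ncard_le_ncard hsub (Set.finite_singleton u)
      simpa using this
    exact cast_step _ _ (by omega)

end BWaux

/-- `tw(G) ≤ max {1, ⌊(3/2) · bw(G)⌋ − 1}`. -/
theorem treewidth_le_of_branchwidth {V : Type} (G : SimpleGraph V)
    (w : ℕ) (hbw : branchwidth G = (w : ℕ∞)) :
    treewidth G ≤ ((max 1 (3 * w / 2 - 1) : ℕ) : ℕ∞) := by
  classical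
  have hex : ∃ d : BranchDecomp G, d.width ≤ (w : ℕ∞) := by
    by_contra h
    push_neg at h
    have hstep : ((w : ℕ∞) + 1) ≤ branchwidth G := by
      apply le_iInf
      intro d
      exact (ENat.add_one_le_iff (by exact_mod_cast (ENat.coe_ne_top w))).mpr (h d)
    rw [hbw] at hstep
    have h1 : ((w + 1 : ℕ) : ℕ∞) ≤ ((w : ℕ) : ℕ∞) := by push_cast; exact hstep
    have h2 : w + 1 ≤ w := by exact_mod_cast h1
    omega
  obtain ⟨d, hd⟩ := hex
  exact le_trans (iInf_le _ (BWaux.theDecomp d)) (BWaux.theDecomp_width_le d w hd)
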